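/- Let sl₂(ℂ[X]) be the Lie algebra of 2×2 trace-zero matrices over the polynomial ring ℂ[X] with bracket [A,B] = AB − BA, and set y = E₁₂, z = E₂₁, h = E₁₁ − E₂₂. For u ∈ ℂ let M(u) = −(1/2)y + (1/2)X·z + (1/3)u·z. Define g^1 to be the Lie subalgebra generated by all differences M(u) − M(u'), and inductively g^{k+1} the Lie subalgebra generated by g^k together with all [x, M(u)], x ∈ g^k, u ∈ ℂ. Then g^1 = ℂ·z, g^2 = span_ℂ{z, h}, and g^3 = sl₂(ℂ[X]) (the whole Lie algebra). -/

import Mathlib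

open Polynomial Matrix

attribute [local instance 100] LieRing.ofAssociativeRing

/-- The chain of subalgebras of `sl₂(ℂ[X])` (as trace-zero `2×2` matrices over
`ℂ[X]`, a Lie algebra over `ℂ` with the commutator bracket) associated with the
`x`-part `M(u) = -(1/2)y + (1/2)X·z + (1/3)u·z` of the projected zero-curvature
representation of KdV: `g¹ = ℂ·z`, `g² = span{z, h}`, `g³ = sl₂(ℂ[X])`. -/
theorem stmt2
    (y z h : Matrix (Fin 2) (Fin 2) ℂ[X])
    (hy : y = Matrix.single 0 1 1)
    (hz : z = Matrix.single 1 0 1)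
    (hh : h = Matrix.single 0 0 1 - Matrix.single 1 1 1)
    (M : ℂ → Matrix (Fin 2) (Fin 2) ℂ[X])
    (hM : ∀ u : ℂ, M u = (-(1/2 : ℂ)) • y + ((1/2 : ℂ) • (X : ℂ[X])) • z
        + ((1/3 : ℂ) * u) • z)
    (g1 g2 g3 : LieSubalgebra ℂ (Matrix (Fin 2) (Fin 2) ℂ[X]))
    (hg1 : g1 = LieSubalgebra.lieSpan ℂ _ {a | ∃ u u' : ℂ, a = M u - M u'})
    (hg2 : g2 = LieSubalgebra.lieSpan ℂ _
      ((g1 : Set (Matrix (Fin 2) (Fin 2) ℂ[X]))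
        ∪ {a | ∃ x ∈ g1, ∃ u : ℂ, a = ⁅x, M u⁆}))
    (hg3 : g3 = LieSubalgebra.lieSpan ℂ _
      ((g2 : Set (Matrix (Fin 2) (Fin 2) ℂ[X]))
        ∪ {a | ∃ x ∈ g2, ∃ u : ℂ, a = ⁅x, M u⁆})) :
    g1.toSubmodule = Submodule.span ℂ {z}
    ∧ g2.toSubmodule = Submodule.span ℂ {z, h}
    ∧ g3.toSubmodule = LinearMap.ker (Matrix.traceLinearMap (Fin 2) ℂ ℂ[X]) := by
  -- basic bracket identities
  have lYZ : ⁅y, z⁆ = h := by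
    subst hy hz hh; refine Matrix.ext fun i j => ?_
    fin_cases i <;> fin_cases j <;>
      simp [Ring.lie_def, Matrix.mul_apply, Fin.sum_univ_two, Matrix.single,
        Polynomial.smul_eq_C_mul, map_ofNat] <;> norm_num
  have lHY : ⁅h, y⁆ = (2:ℂ) • y := by
    subst hy hz hh; refine Matrix.ext fun i j => ?_
    fin_cases i <;> fin_cases j <;>
      simp [Ring.lie_def, Matrix.mul_apply, Fin.sum_univ_two, Matrix.single,
        Polynomial.smul_eq_C_mul, map_ofNat] <;> norm_num
  have lHZ : ⁅h, z⁆ = (-2:ℂ) • z := by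
    subst hy hz hh; refine Matrix.ext fun i j => ?_
    fin_cases i <;> fin_cases j <;>
      simp [Ring.lie_def, Matrix.mul_apply, Fin.sum_univ_two, Matrix.single,
        Polynomial.smul_eq_C_mul, map_ofNat] <;> norm_num
  have lZY : ⁅z, y⁆ = -h := by rw [← lie_skew, lYZ]
  have lZH : ⁅z, h⁆ = (2:ℂ) • z := by rw [← lie_skew, lHZ]; module
  -- ℂ[X]-bilinearity of the bracket
  have lieP : ∀ (p : ℂ[X]) (a b : Matrix (Fin 2) (Fin 2) ℂ[X]), ⁅a, p • b⁆ = p • ⁅a, b⁆ := by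
    intro p a b; simp [Ring.lie_def, Matrix.mul_smul, Matrix.smul_mul, smul_sub]
  have lieP' : ∀ (p : ℂ[X]) (a b : Matrix (Fin 2) (Fin 2) ℂ[X]), ⁅p • a, b⁆ = p • ⁅a, b⁆ := by
    intro p a b; simp [Ring.lie_def, Matrix.mul_smul, Matrix.smul_mul, smul_sub]
  -- traces
  have tY : Matrix.trace y = 0 := by subst hy; simp [Matrix.trace_fin_two, Matrix.single]
  have tZ : Matrix.trace z = 0 := by subst hz; simp [Matrix.trace_fin_two, Matrix.single]
  have tH : Matrix.trace h = 0 := by subst hh; simp [Matrix.trace_fin_two, Matrix.single]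
  have htr : ∀ a b : Matrix (Fin 2) (Fin 2) ℂ[X], Matrix.trace ⁅a, b⁆ = 0 := by
    intro a b
    rw [Ring.lie_def, Matrix.trace_sub, Matrix.trace_mul_comm, sub_self]
  -- M computations
  have hMsub : ∀ u u' : ℂ, M u - M u' = ((1/3) * (u - u') : ℂ) • z := by
    intro u u'; rw [hM, hM]; module
  have hZM : ∀ u : ℂ, ⁅z, M u⁆ = (1/2 : ℂ) • h := by
    intro u
    rw [hM]
    simp only [lie_add, lie_smul, lieP, lZY, lie_self, smul_zero, add_zero, smul_neg]
    match_scalars <;> push_cast <;> ring_nf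
  have hHM0 : ⁅h, M 0⁆ = -(y + (X : ℂ[X]) • z) := by
    rw [hM]
    simp only [lie_add, lie_smul, lieP, lHY, lHZ, mul_zero, zero_smul, add_zero]
    rw [smul_comm ((1/2:ℂ) • (X:ℂ[X])) (-2:ℂ) z, smul_assoc]
    norm_num [smul_smul]
    module
  have hD : ∀ n : ℕ, ⁅((X:ℂ[X])^n) • y, (X:ℂ[X]) • z⁆ = ((X:ℂ[X])^(n+1)) • h := by
    intro n; rw [lieP', lieP, lYZ, smul_smul, ← pow_succ]
  have hE : ∀ p : ℂ[X], ⁅p • h, y⁆ = (2:ℂ) • (p • y) := by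
    intro p; rw [lieP', lHY, smul_comm]
  have hF : ∀ p : ℂ[X], ⁅p • h, z⁆ = (-2:ℂ) • (p • z) := by
    intro p; rw [lieP', lHZ, smul_comm]
  -- Part 1 : g1
  let K1 : LieSubalgebra ℂ (Matrix (Fin 2) (Fin 2) ℂ[X]) :=
    { Submodule.span ℂ {z} with
      lie_mem' := by
        intro a b ha hb
        replace ha : a ∈ Submodule.span ℂ {z} := ha
        replace hb : b ∈ Submodule.span ℂ {z} := hb
        rw [Submodule.mem_span_singleton] at ha hb
        obtain ⟨c, rfl⟩ := ha; obtain ⟨d, rfl⟩ := hb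
        show ⁅c • z, d • z⁆ ∈ Submodule.span ℂ {z}
        simp [lie_smul, smul_lie] }
  have hzg1 : z ∈ g1 := by
    have h0 : M 1 - M 0 ∈ g1 := by
      rw [hg1]; exact LieSubalgebra.subset_lieSpan ⟨1, 0, rfl⟩
    have h3 : (3:ℂ) • (M 1 - M 0) = z := by
      rw [hMsub, smul_smul]; norm_num
    exact h3 ▸ g1.smul_mem (3:ℂ) h0
  have hg1' : g1.toSubmodule = Submodule.span ℂ {z} := by
    apply le_antisymm
    · have hle : g1 ≤ K1 := by
        rw [hg1]
        apply LieSubalgebra.lieSpan_le.2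
        rintro a ⟨u, u', rfl⟩
        show M u - M u' ∈ Submodule.span ℂ {z}
        rw [hMsub]
        exact Submodule.smul_mem _ _ (Submodule.mem_span_singleton_self z)
      intro x hx
      exact hle hx
    · rw [Submodule.span_le]
      intro a ha
      rw [Set.mem_singleton_iff] at ha
      subst ha
      exact hzg1
  have memg1 : ∀ x, x ∈ g1 ↔ x ∈ Submodule.span ℂ ({z} : Set (Matrix (Fin 2) (Fin 2) ℂ[X])) := by
    intro x
    rw [← hg1']
    rfl
  -- Part 2 : g2
  have expand2 : ∀ a b c d : ℂ, ⁅a • z + b • h, c • z + d • h⁆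
      = (2*(a*d) - 2*(b*c)) • z := by
    intro a b c d
    simp only [add_lie, lie_add, smul_lie, lie_smul, lie_self, lZH, lHZ, smul_zero,
      zero_add, add_zero]
    match_scalars <;> push_cast <;> ring
  let K2 : LieSubalgebra ℂ (Matrix (Fin 2) (Fin 2) ℂ[X]) :=
    { Submodule.span ℂ {z, h} with
      lie_mem' := by
        intro a b ha hb
        replace ha : a ∈ Submodule.span ℂ {z, h} := ha
        replace hb : b ∈ Submodule.span ℂ {z, h} := hb
        rw [Submodule.mem_span_pair] at ha hb
        obtain ⟨a1, a2, rfl⟩ := ha; obtain ⟨b1, b2, rfl⟩ := hb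
        show ⁅a1 • z + a2 • h, b1 • z + b2 • h⁆ ∈ Submodule.span ℂ {z, h}
        rw [expand2]
        exact Submodule.smul_mem _ _ (Submodule.subset_span (by simp)) }
  have hzspan2 : z ∈ Submodule.span ℂ ({z, h} : Set (Matrix (Fin 2) (Fin 2) ℂ[X])) :=
    Submodule.subset_span (by simp)
  have hhspan2 : h ∈ Submodule.span ℂ ({z, h} : Set (Matrix (Fin 2) (Fin 2) ℂ[X])) :=
    Submodule.subset_span (by simp)
  have hzg2 : z ∈ g2 := by
    rw [hg2]; exact LieSubalgebra.subset_lieSpan (Set.mem_union_left _ hzg1)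
  have hhg2 : h ∈ g2 := by
    have hb : ⁅z, M 0⁆ ∈ g2 := by
      rw [hg2]
      exact LieSubalgebra.subset_lieSpan (Set.mem_union_right _ ⟨z, hzg1, 0, rfl⟩)
    have h2 : (2:ℂ) • ⁅z, M 0⁆ = h := by
      rw [hZM, smul_smul]; norm_num
    exact h2 ▸ g2.smul_mem (2:ℂ) hb
  have hg2' : g2.toSubmodule = Submodule.span ℂ {z, h} := by
    apply le_antisymm
    · have hle : g2 ≤ K2 := by
        rw [hg2]
        apply LieSubalgebra.lieSpan_le.2
        rintro a (ha | ⟨x, hx, u, rfl⟩)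
        · have : a ∈ Submodule.span ℂ ({z} : Set (Matrix (Fin 2) (Fin 2) ℂ[X])) :=
            (memg1 a).1 ha
          exact Submodule.span_mono (by simp) this
        · rw [memg1, Submodule.mem_span_singleton] at hx
          obtain ⟨c, rfl⟩ := hx
          show ⁅c • z, M u⁆ ∈ Submodule.span ℂ {z, h}
          rw [smul_lie, hZM, smul_smul]
          exact Submodule.smul_mem _ _ hhspan2
      intro x hx
      exact hle hx
    · rw [Submodule.span_le]
      rintro a (rfl | rfl)
      · exact hzg2
      · exact hhg2
  have memg2 : ∀ x, x ∈ g2 ↔ x ∈ Submodule.span ℂ ({z, h} : Set (Matrix (Fin 2) (Fin 2) ℂ[X])) := by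
    intro x
    rw [← hg2']
    rfl
  -- Part 3 : g3
  let K3 : LieSubalgebra ℂ (Matrix (Fin 2) (Fin 2) ℂ[X]) :=
    { LinearMap.ker (Matrix.traceLinearMap (Fin 2) ℂ ℂ[X]) with
      lie_mem' := by
        intro a b _ _
        show ⁅a, b⁆ ∈ LinearMap.ker (Matrix.traceLinearMap (Fin 2) ℂ ℂ[X])
        rw [LinearMap.mem_ker]
        exact htr a b }
  -- elements of g3
  have hzg3 : z ∈ g3 := by
    rw [hg3]; exact LieSubalgebra.subset_lieSpan (Set.mem_union_left _ hzg2)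
  have hhg3 : h ∈ g3 := by
    rw [hg3]; exact LieSubalgebra.subset_lieSpan (Set.mem_union_left _ hhg2)
  have hwg3 : y + (X:ℂ[X]) • z ∈ g3 := by
    have hb : ⁅h, M 0⁆ ∈ g3 := by
      rw [hg3]
      exact LieSubalgebra.subset_lieSpan (Set.mem_union_right _ ⟨h, hhg2, 0, rfl⟩)
    have := g3.neg_mem hb
    rwa [hHM0, neg_neg] at this
  have hyg3 : y ∈ g3 := by
    have hb : ⁅h, y + (X:ℂ[X]) • z⁆ ∈ g3 := g3.lie_mem hhg3 hwg3
    have e' : ⁅h, y + (X:ℂ[X]) • z⁆ = (2:ℂ) • y + (-2:ℂ) • ((X:ℂ[X]) • z) := by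
      rw [lie_add, lHY, lieP, lHZ, smul_comm (X:ℂ[X]) (-2:ℂ) z]
    have e : y = (1/4:ℂ) • (((2:ℂ) • y + (-2:ℂ) • ((X:ℂ[X]) • z))
        + (2:ℂ) • (y + (X:ℂ[X]) • z)) := by
      generalize (X:ℂ[X]) • z = m
      module
    rw [e]
    exact g3.smul_mem _ (g3.add_mem (e' ▸ hb) (g3.smul_mem _ hwg3))
  have hXzg3 : (X:ℂ[X]) • z ∈ g3 := by
    have := g3.sub_mem hwg3 hyg3
    rwa [add_sub_cancel_left] at this
  -- key induction
  have key : ∀ n : ℕ, ((X:ℂ[X])^n) • y ∈ g3 ∧ ((X:ℂ[X])^n) • z ∈ g3 ∧ ((X:ℂ[X])^n) • h ∈ g3 := by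
    intro n
    induction n with
    | zero => simpa [pow_zero, one_smul] using ⟨hyg3, hzg3, hhg3⟩
    | succ n ih =>
      have hh' : ((X:ℂ[X])^(n+1)) • h ∈ g3 := by
        rw [← hD n]
        exact g3.lie_mem ih.1 hXzg3
      refine ⟨?_, ?_, hh'⟩
      · have e : (1/2:ℂ) • ⁅((X:ℂ[X])^(n+1)) • h, y⁆ = ((X:ℂ[X])^(n+1)) • y := by
          rw [hE, smul_smul]; norm_num
        exact e ▸ g3.smul_mem _ (g3.lie_mem hh' hyg3)
      · have e : (-(1/2):ℂ) • ⁅((X:ℂ[X])^(n+1)) • h, z⁆ = ((X:ℂ[X])^(n+1)) • z := by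
          rw [hF, smul_smul]; norm_num
        exact e ▸ g3.smul_mem _ (g3.lie_mem hh' hzg3)
  have keyP : ∀ p : ℂ[X], p • y ∈ g3 ∧ p • z ∈ g3 ∧ p • h ∈ g3 := by
    intro p
    induction p using Polynomial.induction_on' with
    | add p q hp hq =>
      exact ⟨by rw [add_smul]; exact g3.add_mem hp.1 hq.1,
        by rw [add_smul]; exact g3.add_mem hp.2.1 hq.2.1,
        by rw [add_smul]; exact g3.add_mem hp.2.2 hq.2.2⟩
    | monomial n a =>
      have e : ∀ m : Matrix (Fin 2) (Fin 2) ℂ[X],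
          (Polynomial.monomial n a) • m = a • (((X:ℂ[X])^n) • m) := by
        intro m
        rw [← Polynomial.C_mul_X_pow_eq_monomial, mul_smul, ← Polynomial.algebraMap_eq,
          algebraMap_smul]
      exact ⟨by rw [e]; exact g3.smul_mem _ (key n).1,
        by rw [e]; exact g3.smul_mem _ (key n).2.1,
        by rw [e]; exact g3.smul_mem _ (key n).2.2⟩
  -- decomposition of trace-zero matrices
  have decomp : ∀ A : Matrix (Fin 2) (Fin 2) ℂ[X], Matrix.trace A = 0 →
      A = (A 0 1) • y + (A 1 0) • z + (A 0 0) • h := by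
    intro A hA
    rw [Matrix.trace_fin_two] at hA
    have h11 : A 1 1 = -(A 0 0) := by linear_combination hA
    subst hy hz hh
    refine Matrix.ext fun i j => ?_
    fin_cases i <;> fin_cases j <;>
      simp [Matrix.single, h11, smul_eq_mul]
  have hg3' : g3.toSubmodule = LinearMap.ker (Matrix.traceLinearMap (Fin 2) ℂ ℂ[X]) := by
    apply le_antisymm
    · have hle : g3 ≤ K3 := by
        rw [hg3]
        apply LieSubalgebra.lieSpan_le.2
        rintro a (ha | ⟨x, hx, u, rfl⟩)
        · replace ha : a ∈ Submodule.span ℂ ({z, h} : Set (Matrix (Fin 2) (Fin 2) ℂ[X])) :=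
            (memg2 a).1 ha
          rw [Submodule.mem_span_pair] at ha
          obtain ⟨c, d, rfl⟩ := ha
          show c • z + d • h ∈ LinearMap.ker (Matrix.traceLinearMap (Fin 2) ℂ ℂ[X])
          rw [LinearMap.mem_ker]
          show Matrix.trace (c • z + d • h) = 0
          rw [Matrix.trace_add, Matrix.trace_smul, Matrix.trace_smul, tZ, tH]
          simp
        · show ⁅x, M u⁆ ∈ LinearMap.ker (Matrix.traceLinearMap (Fin 2) ℂ ℂ[X])
          rw [LinearMap.mem_ker]
          exact htr x (M u)
      intro x hx
      exact hle hx
    · intro A hA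
      rw [LinearMap.mem_ker] at hA
      replace hA : Matrix.trace A = 0 := hA
      show A ∈ g3
      rw [decomp A hA]
      exact g3.add_mem (g3.add_mem (keyP _).1 (keyP _).2.1) (keyP _).2.2
  exact ⟨hg1', hg2', hg3'⟩
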